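/- For every dimension d ≥ 1, every p ∈ (1,∞) with Hölder conjugate q = p/(p−1), every α > 0 and every ε > 0, the heat kernel satisfies the exact identity ‖Φ_ε‖_{𝒲^{−α,p}} = ε^{(α − d/q)/2} · p^{−d/(2p)} (4π)^{−d/(2q)} · 𝓑₀(ε, α, p, d)^{1/p}, where 𝓑₀(ε, α, p, d) = ∫₀^{1/ε} s^{αp/2 − 1} (1+s)^{−(p−1)d/2} ds. -/

import Mathlib

open MeasureTheory ProbabilityTheory Real Filter
open scoped ENNReal Topology Classical

noncomputable section

abbrev Esp (d : ℕ) := EuclideanSpace ℝ (Fin d)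

/-- The heat kernel on `ℝ^d`. -/
def heatK (d : ℕ) (t : ℝ) (x : Esp d) : ℝ :=
  (4 * π * t) ^ (-(d : ℝ) / 2) * Real.exp (-‖x‖ ^ 2 / (4 * t))

/-- The `𝒲^{-α,p}` norm, applied to the heat evolution `u t = distribution * Φ_t`. -/
def calWNorm (d : ℕ) (α p : ℝ) (u : ℝ → Esp d → ℝ) : ℝ≥0∞ :=
  (∫⁻ t in Set.Ioc (0:ℝ) 1, ENNReal.ofReal (t ^ (α * p / 2 - 1)) *
      ∫⁻ x, ENNReal.ofReal (|u t x| ^ p)) ^ (1 / p)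

/-- Heat evolution of `Φ_ε` (of `δ₀` when `ε = 0`): `Φ_ε * Φ_t = Φ_{t+ε}`. -/
def phiEvol (d : ℕ) (ε : ℝ) : ℝ → Esp d → ℝ := fun t x => heatK d (t + ε) x

lemma integrable_gauss {V : Type*} [NormedAddCommGroup V] [InnerProductSpace ℝ V]
    [FiniteDimensional ℝ V] [MeasurableSpace V] [BorelSpace V] {b : ℝ} (hb : 0 < b) :
    Integrable (fun v : V => rexp (-b * ‖v‖^2)) := by
  have h := GaussianFourier.integrable_cexp_neg_mul_sq_norm_add (V := V) (b := (b:ℂ))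
    (by simpa using hb) 0 0
  simp only [zero_mul, add_zero] at h
  have h2 := h.re
  refine h2.congr (Filter.Eventually.of_forall fun v => ?_)
  show (Complex.exp _).re = _
  rw [show (-(b:ℂ) * (‖v‖:ℂ) ^ 2) = ((-b * ‖v‖^2 : ℝ) : ℂ) from by push_cast; ring,
    ← Complex.ofReal_exp, Complex.ofReal_re]

/-- The `L^p` mass of the heat kernel at time `T`. -/
lemma lintegral_heatK_rpow (d : ℕ) {p T : ℝ} (hp : 0 < p) (hT : 0 < T) :
    ∫⁻ x : Esp d, ENNReal.ofReal (|heatK d T x| ^ p) =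
      ENNReal.ofReal (p ^ (-(d:ℝ)/2) * (4*π*T) ^ (-(d:ℝ)*(p-1)/2)) := by
  have h4T : (0:ℝ) < 4 * π * T := by positivity
  have hb : (0:ℝ) < p / (4 * T) := by positivity
  have key : ∀ x : Esp d, |heatK d T x| ^ p =
      (4*π*T) ^ (-(d:ℝ)*p/2) * rexp (-(p / (4*T)) * ‖x‖^2) := by
    intro x
    have h1 : (0:ℝ) < (4*π*T) ^ (-(d:ℝ)/2) := rpow_pos_of_pos h4T _
    have habs : |heatK d T x| = heatK d T x := by
      rw [abs_of_pos]
      exact mul_pos h1 (exp_pos _)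
    rw [habs, heatK, Real.mul_rpow h1.le (exp_pos _).le, ← Real.rpow_natCast]
    rw [← Real.rpow_mul h4T.le, ← Real.exp_mul]
    norm_num
    ring_nf
  simp_rw [key]
  rw [← ofReal_integral_eq_lintegral_ofReal
    (((integrable_gauss hb).const_mul _))
    (Filter.Eventually.of_forall fun x => by positivity)]
  congr 1
  rw [integral_const_mul, GaussianFourier.integral_rexp_neg_mul_sq_norm hb]
  have hrank : (Module.finrank ℝ (Esp d) : ℝ) = (d : ℝ) := by
    rw [finrank_euclideanSpace_fin]
  rw [hrank]
  have hdiv : π / (p / (4*T)) = (4*π*T) / p := by field_simp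
  rw [hdiv, Real.div_rpow h4T.le hp.le]
  have hX : (4*π*T)^(-(d:ℝ)*p/2) * (4*π*T)^((d:ℝ)/2) = (4*π*T)^(-(d:ℝ)*(p-1)/2) := by
    rw [← Real.rpow_add h4T]; congr 1; ring
  rw [div_eq_mul_inv _ (p ^ ((d:ℝ)/2)), ← mul_assoc, hX, ← Real.rpow_neg hp.le, mul_comm, neg_div]

lemma real_outer (d : ℕ) {p α ε : ℝ} (hp : 1 < p) (hα : 0 < α) (hε : 0 < ε) :
    ∫ t in Set.Ioc (0:ℝ) 1, t ^ (α*p/2 - 1) * (t + ε) ^ (-(d:ℝ)*(p-1)/2) =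
      ε ^ (α*p/2 - 1 + (-(d:ℝ)*(p-1)/2) + 1) *
        ∫ s in Set.Ioc (0:ℝ) (1/ε), s ^ (α*p/2-1) * (1+s) ^ (-((p-1)*(d:ℝ)/2)) := by
  set m : ℝ := α*p/2 - 1 with hm
  set e : ℝ := -(d:ℝ)*(p-1)/2 with he
  have hεne : ε ≠ 0 := ne_of_gt hε
  have h2 := intervalIntegral.integral_comp_mul_left (a := (0:ℝ)) (b := 1/ε)
    (c := ε) (f := fun t => t ^ m * (t + ε) ^ e) hεne
  simp only [mul_zero, mul_one_div_cancel hεne, smul_eq_mul] at h2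
  have h3 : ∫ x in (0:ℝ)..1, x ^ m * (x + ε) ^ e
      = ε * ∫ x in (0:ℝ)..(1/ε), (ε * x) ^ m * (ε * x + ε) ^ e := by
    rw [h2, ← mul_assoc, mul_inv_cancel₀ hεne, one_mul]
  rw [← intervalIntegral.integral_of_le zero_le_one, h3,
    intervalIntegral.integral_of_le (by positivity : (0:ℝ) ≤ 1/ε)]
  rw [setIntegral_congr_fun measurableSet_Ioc
    (show Set.EqOn (fun s => (ε * s) ^ m * (ε * s + ε) ^ e)
      (fun s => (ε ^ m * ε ^ e) * (s ^ m * (1+s) ^ (-((p-1)*(d:ℝ)/2)))) (Set.Ioc 0 (1/ε)) from ?_)]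
  · rw [integral_const_mul]
    rw [show (m + e + 1 : ℝ) = 1 + (m + e) from by ring, Real.rpow_add hε,
      Real.rpow_add hε, Real.rpow_one]
    ring
  · intro s hs
    have hs0 : (0:ℝ) < s := hs.1
    have h1s : (0:ℝ) < 1 + s := by linarith
    simp only
    rw [Real.mul_rpow hε.le hs0.le,
      show ε * s + ε = ε * (1 + s) from by ring,
      Real.mul_rpow hε.le h1s.le]
    rw [show -((p-1)*(d:ℝ)/2) = e from by rw [he]; ring]
    ring

/-- Exact formula for `‖Φ_ε‖_{𝒲^{-α,p}}`. -/
theorem calWNorm_heat_kernel_eq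
    (d : ℕ) (hd : 1 ≤ d) (p α ε : ℝ) (hp : 1 < p) (hα : 0 < α) (hε : 0 < ε) :
    calWNorm d α p (phiEvol d ε) =
      ENNReal.ofReal (ε ^ ((α - (d : ℝ) / (p / (p - 1))) / 2) *
        (p ^ (-(d : ℝ) / (2 * p)) * (4 * π) ^ (-(d : ℝ) / (2 * (p / (p - 1))))) *
        (∫ s in Set.Ioc (0 : ℝ) (1 / ε),
            s ^ (α * p / 2 - 1) * (1 + s) ^ (-((p - 1) * (d : ℝ) / 2))) ^ (1 / p)) := by
  have hp0 : (0:ℝ) < p := lt_trans one_pos hp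
  have hp1 : (0:ℝ) < p - 1 := by linarith
  set m : ℝ := α*p/2 - 1 with hm
  set e : ℝ := -(d:ℝ)*(p-1)/2 with he
  have hm1 : (-1:ℝ) < m := by
    have : 0 < α * p / 2 := by positivity
    simp only [hm]; linarith
  have he0 : e ≤ 0 := by
    have : 0 ≤ (d:ℝ)*(p-1)/2 := by positivity
    simp only [he]; linarith
  set C : ℝ := p ^ (-(d:ℝ)/2) * (4*π) ^ e with hC
  have hCpos : 0 < C := by
    simp only [hC]
    have h4π : (0:ℝ) < 4*π := by positivity
    exact mul_pos (Real.rpow_pos_of_pos hp0 _) (Real.rpow_pos_of_pos h4π _)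
  set B : ℝ := ∫ s in Set.Ioc (0:ℝ) (1/ε),
      s ^ (α * p / 2 - 1) * (1 + s) ^ (-((p - 1) * (d : ℝ) / 2)) with hB
  have hBnn : 0 ≤ B := by
    refine setIntegral_nonneg measurableSet_Ioc fun s hs => ?_
    exact mul_nonneg (Real.rpow_nonneg hs.1.le _)
      (Real.rpow_nonneg (by linarith [hs.1] : (0:ℝ) ≤ 1 + s) _)
  -- Step 1: compute the inner x-integral and merge into a real integral
  have step1 : calWNorm d α p (phiEvol d ε) =
      (ENNReal.ofReal (∫ t in Set.Ioc (0:ℝ) 1, C * (t ^ m * (t + ε) ^ e))) ^ (1/p) := by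
    rw [calWNorm]
    congr 1
    -- pointwise rewrite of the integrand
    have hcongr : ∀ t ∈ Set.Ioc (0:ℝ) 1,
        ENNReal.ofReal (t ^ (α * p / 2 - 1)) *
          ∫⁻ x, ENNReal.ofReal (|phiEvol d ε t x| ^ p) =
        ENNReal.ofReal (C * (t ^ m * (t + ε) ^ e)) := by
      intro t ht
      have htε : (0:ℝ) < t + ε := by linarith [ht.1]
      have : ∫⁻ x : Esp d, ENNReal.ofReal (|phiEvol d ε t x| ^ p) =
          ENNReal.ofReal (p ^ (-(d:ℝ)/2) * (4*π*(t+ε)) ^ (-(d:ℝ)*(p-1)/2)) := by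
        simp only [phiEvol]
        exact lintegral_heatK_rpow d hp0 htε
      rw [this, ← ENNReal.ofReal_mul (Real.rpow_nonneg ht.1.le _)]
      congr 1
      have h4π : (0:ℝ) ≤ 4*π := by positivity
      rw [show (4*π*(t+ε)) = (4*π)*(t+ε) from rfl, Real.mul_rpow h4π htε.le]
      simp only [hC, he, hm]
      ring
    rw [setLIntegral_congr_fun measurableSet_Ioc hcongr]
    -- convert to a real integral
    have hint : IntegrableOn (fun t : ℝ => t ^ m * (t + ε) ^ e) (Set.Ioc (0:ℝ) 1) := by
      have hbase : IntegrableOn (fun t : ℝ => t ^ m) (Set.Ioc (0:ℝ) 1) :=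
        (intervalIntegrable_iff_integrableOn_Ioc_of_le zero_le_one).mp
          (intervalIntegral.intervalIntegrable_rpow' hm1)
      refine Integrable.mono' (hbase.const_mul (ε ^ e)) ?_ ?_
      · refine ((ContinuousOn.rpow_const continuousOn_id
            (fun t ht => Or.inl (ne_of_gt ht.1))).mul
          (ContinuousOn.rpow_const ((continuous_id.add continuous_const).continuousOn)
            (fun t ht => Or.inl (by have := ht.1; show t + ε ≠ 0; positivity)))).aestronglyMeasurable
          measurableSet_Ioc
      · filter_upwards [ae_restrict_mem measurableSet_Ioc] with t ht
        have ht0 : (0:ℝ) < t := ht.1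
        have htε : (0:ℝ) < t + ε := by linarith
        rw [Real.norm_eq_abs, abs_of_nonneg
          (mul_nonneg (Real.rpow_nonneg ht0.le _) (Real.rpow_nonneg htε.le _))]
        have hle : (t + ε) ^ e ≤ ε ^ e :=
          Real.rpow_le_rpow_of_nonpos hε (by linarith) he0
        calc t ^ m * (t + ε) ^ e ≤ t ^ m * ε ^ e :=
              mul_le_mul_of_nonneg_left hle (Real.rpow_nonneg ht0.le _)
          _ = ε ^ e * t ^ m := by ring
    rw [← ofReal_integral_eq_lintegral_ofReal (hint.const_mul C) ?_]
    · filter_upwards [ae_restrict_mem measurableSet_Ioc] with t ht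
      have ht0 : (0:ℝ) < t := ht.1
      have htε : (0:ℝ) < t + ε := by linarith
      exact mul_nonneg hCpos.le
        (mul_nonneg (Real.rpow_nonneg ht0.le _) (Real.rpow_nonneg htε.le _))
  rw [step1, integral_const_mul, real_outer d hp hα hε, ← hm, ← he, ← hB]
  rw [ENNReal.ofReal_rpow_of_nonneg
    (mul_nonneg hCpos.le (mul_nonneg (Real.rpow_nonneg hε.le _) hBnn))
    (by positivity : (0:ℝ) ≤ 1/p)]
  congr 1
  have hεe : (0:ℝ) ≤ ε ^ (m + e + 1) := Real.rpow_nonneg hε.le _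
  rw [Real.mul_rpow hCpos.le (mul_nonneg hεe hBnn), Real.mul_rpow hεe hBnn,
    hC, Real.mul_rpow (Real.rpow_nonneg hp0.le _) (Real.rpow_nonneg (by positivity) _),
    ← Real.rpow_mul hp0.le, ← Real.rpow_mul (by positivity : (0:ℝ) ≤ 4*π),
    ← Real.rpow_mul hε.le]
  have hpne : p ≠ 0 := ne_of_gt hp0
  have hp1ne : p - 1 ≠ 0 := ne_of_gt hp1
  rw [show (-(d:ℝ)/2) * (1/p) = -(d:ℝ)/(2*p) from by field_simp,
    show e * (1/p) = -(d:ℝ)/(2*(p/(p-1))) from by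
      simp only [he]; field_simp; try ring
      ,
    show (m + e + 1) * (1/p) = (α - (d:ℝ)/(p/(p-1)))/2 from by
      simp only [hm, he]; field_simp; try ring
      ]
  ring

end
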